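/- arXiv:1811.07464 — 6 statements merged into one kernel-verified Lean document; each statement's English description precedes it below -/
import Mathlib

section
/- Let 0 < ε < 1, let M₀ > 0 be a real number, and let k ≥ 1 and N ≥ 1 be integers with (1−ε)^N ≤ (ε/k)². Let B be a finite set with |B| ≤ k and let w, v : B → ℝ be functions such that: (i) 0 ≤ v(e) ≤ w(e) for every e ∈ B; (ii) every e ∈ B either satisfies w(e) = (1−ε)^{j−1} M₀ for some j ∈ {1,…,N} (in which case we say e lies in bucket j), or satisfies 0 ≤ w(e) ≤ (1−ε)^N M₀; and (iii) for each j ∈ {1,…,N}, at least half of the elements e of bucket j satisfy v(e) ≥ (1−ε) w(e). Then Σ_{e∈B} v(e) ≥ ((1−ε)/2) · Σ_{e∈B} w(e) − (ε²/k) M₀. -/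
open scoped Classical BigOperators

/-- If the cached weights `w` on a set `B` lie on the geometric grid
`(1-ε)^(j-1) * M₀` (buckets `j = 1, …, N`) or are at most `(1-ε)^N * M₀`, the true
values `v` satisfy `0 ≤ v ≤ w`, and in every bucket at least half of the elements
satisfy `v e ≥ (1-ε) * w e`, then
`∑ v ≥ ((1-ε)/2) * ∑ w - (ε²/k) * M₀`. -/
theorem stmt0 {α : Type*} (ε M₀ : ℝ) (k N : ℕ) (B : Finset α) (w v : α → ℝ)
    (hε0 : 0 < ε) (hε1 : ε < 1) (hM : 0 < M₀) (hk : 1 ≤ k) (hN : 1 ≤ N)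
    (hNk : (1 - ε) ^ N ≤ (ε / k) ^ 2)
    (hB : B.card ≤ k)
    (hvw : ∀ e ∈ B, 0 ≤ v e ∧ v e ≤ w e)
    (hbucket : ∀ e ∈ B,
      (∃ j ∈ Finset.Icc 1 N, w e = (1 - ε) ^ (j - 1) * M₀) ∨
      (0 ≤ w e ∧ w e ≤ (1 - ε) ^ N * M₀))
    (hhalf : ∀ j ∈ Finset.Icc 1 N,
      (B.filter (fun e => w e = (1 - ε) ^ (j - 1) * M₀)).card ≤
        2 * (B.filter (fun e => w e = (1 - ε) ^ (j - 1) * M₀ ∧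
          v e ≥ (1 - ε) * w e)).card) :
    ∑ e ∈ B, v e ≥ (1 - ε) / 2 * ∑ e ∈ B, w e - ε ^ 2 / k * M₀ := by
  classical
  have h1ε : (0:ℝ) < 1 - ε := by linarith
  have hk0 : (0:ℝ) < (k:ℝ) := by exact_mod_cast hk
  set P : α → Prop := fun e => ∃ j ∈ Finset.Icc 1 N, w e = (1 - ε) ^ (j - 1) * M₀ with hP
  set S := B.filter (fun e => P e) with hS
  set T := B.filter (fun e => ¬ P e) with hT
  have hsplitv : ∑ e ∈ B, v e = ∑ e ∈ S, v e + ∑ e ∈ T, v e :=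
    (Finset.sum_filter_add_sum_filter_not B _ _).symm
  have hsplitw : ∑ e ∈ B, w e = ∑ e ∈ S, w e + ∑ e ∈ T, w e :=
    (Finset.sum_filter_add_sum_filter_not B _ _).symm
  have hTB : ∀ e ∈ T, e ∈ B := fun e he => (Finset.mem_filter.mp he).1
  -- T bounds
  have hTw : ∑ e ∈ T, w e ≤ ε ^ 2 / k * M₀ := by
    have hle : ∀ e ∈ T, w e ≤ (1 - ε) ^ N * M₀ := by
      intro e he
      have he' := Finset.mem_filter.mp he
      rcases hbucket e he'.1 with h | h
      · exact absurd h he'.2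
      · exact h.2
    have hcard : (T.card : ℝ) ≤ k := by
      have : T.card ≤ B.card := Finset.card_filter_le _ _
      exact_mod_cast this.trans hB
    have hpos : (0:ℝ) ≤ (1 - ε) ^ N * M₀ := by positivity
    calc ∑ e ∈ T, w e ≤ ∑ _e ∈ T, (1 - ε) ^ N * M₀ := Finset.sum_le_sum hle
      _ = (T.card : ℝ) * ((1 - ε) ^ N * M₀) := by
          rw [Finset.sum_const]; push_cast; ring
      _ ≤ (k:ℝ) * ((ε / k) ^ 2 * M₀) := by
          apply mul_le_mul hcard _ hpos (le_of_lt hk0)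
          exact mul_le_mul_of_nonneg_right hNk hM.le
      _ = ε ^ 2 / k * M₀ := by field_simp
  have hTw0 : 0 ≤ ∑ e ∈ T, w e :=
    Finset.sum_nonneg fun e he => le_trans (hvw e (hTB e he)).1 (hvw e (hTB e he)).2
  have hTv0 : 0 ≤ ∑ e ∈ T, v e :=
    Finset.sum_nonneg fun e he => (hvw e (hTB e he)).1
  -- S bound
  have hSkey : (1 - ε) / 2 * ∑ e ∈ S, w e ≤ ∑ e ∈ S, v e := by
    have hS_eq : S = (Finset.Icc 1 N).biUnion
        (fun j => B.filter (fun e => w e = (1 - ε) ^ (j - 1) * M₀)) := by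
      ext e
      simp only [hS, hP, Finset.mem_filter, Finset.mem_biUnion]
      tauto
    have hinj : ∀ i ∈ Finset.Icc 1 N, ∀ j ∈ Finset.Icc 1 N, i ≠ j →
        (1 - ε) ^ (i - 1) * M₀ ≠ (1 - ε) ^ (j - 1) * M₀ := by
      intro i hi j hj hij
      simp only [Finset.mem_Icc] at hi hj
      intro heq
      have hpow : (1 - ε) ^ (i - 1) = (1 - ε) ^ (j - 1) :=
        mul_right_cancel₀ hM.ne' heq
      have : i - 1 = j - 1 := by
        by_contra hne
        rcases Nat.lt_or_ge (i-1) (j-1) with h | h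
        · have := pow_lt_pow_right_of_lt_one₀ h1ε (by linarith) h
          linarith [hpow ▸ this]
        · have hlt : j - 1 < i - 1 := lt_of_le_of_ne h (Ne.symm hne)
          have := pow_lt_pow_right_of_lt_one₀ h1ε (by linarith) hlt
          linarith [hpow ▸ this]
      exact hij (by omega)
    have hdisj : (↑(Finset.Icc 1 N : Finset ℕ) : Set ℕ).PairwiseDisjoint
        (fun j => B.filter (fun e => w e = (1 - ε) ^ (j - 1) * M₀)) := by
      intro i hi j hj hij
      simp only [Finset.disjoint_left, Finset.mem_filter]
      rintro e ⟨heB, hei⟩ ⟨_, hej⟩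
      exact hinj i hi j hj hij (hei ▸ hej ▸ rfl)
    rw [hS_eq, Finset.sum_biUnion hdisj, Finset.sum_biUnion hdisj, Finset.mul_sum]
    apply Finset.sum_le_sum
    intro j hj
    set cj : ℝ := (1 - ε) ^ (j - 1) * M₀ with hcj
    have hcj0 : 0 < cj := by positivity
    set A := B.filter (fun e => w e = cj) with hA
    set G := B.filter (fun e => w e = cj ∧ v e ≥ (1 - ε) * w e) with hG
    have hGA : G ⊆ A := by
      intro e he
      simp only [hG, hA, Finset.mem_filter] at he ⊢
      exact ⟨he.1, he.2.1⟩
    have hAw : ∑ e ∈ A, w e = (A.card : ℝ) * cj := by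
      rw [Finset.sum_congr rfl (fun e he => (Finset.mem_filter.mp he).2),
        Finset.sum_const]
      push_cast; ring
    have hAv : ∑ e ∈ A, v e ≥ (G.card : ℝ) * ((1 - ε) * cj) := by
      calc ∑ e ∈ A, v e ≥ ∑ e ∈ G, v e :=
            Finset.sum_le_sum_of_subset_of_nonneg hGA
              (fun e he _ => (hvw e (Finset.mem_filter.mp he).1).1)
        _ ≥ ∑ _e ∈ G, (1 - ε) * cj := by
            apply Finset.sum_le_sum
            intro e he
            have he' := (Finset.mem_filter.mp he).2
            calc (1 - ε) * cj = (1 - ε) * w e := by rw [he'.1]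
              _ ≤ v e := he'.2
        _ = (G.card : ℝ) * ((1 - ε) * cj) := by
            rw [Finset.sum_const]; push_cast; ring
    have hcard := hhalf j hj
    have hcard' : (A.card : ℝ) ≤ 2 * G.card := by exact_mod_cast hcard
    rw [hAw]
    nlinarith [hAv, hcj0, mul_le_mul_of_nonneg_right hcard' (mul_pos h1ε hcj0).le]
  -- combine
  have hfin : (1 - ε) / 2 * ∑ e ∈ T, w e ≤ ε ^ 2 / k * M₀ := by
    have h1 : (1 - ε) / 2 * ∑ e ∈ T, w e ≤ ∑ e ∈ T, w e := by nlinarith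
    linarith
  rw [hsplitv, hsplitw]
  nlinarith [hSkey, hTv0, hfin]
end

section
/- Let M be a matroid on a finite ground set V, let S be an independent set of M, and let f : 2^V → ℝ be a monotone submodular set function. Let w : V \ S → ℝ satisfy w(e) ≥ 0 and w(e) ≥ f(S ∪ {e}) − f(S) for every e ∈ V \ S, and let B be a base of the contraction M/S that maximizes Σ_{e∈B} w(e) over all bases of M/S. Then for every S' ⊆ V \ S such that S' ∪ S is independent in M, Σ_{e∈S'} (f(S ∪ {e}) − f(S)) ≤ Σ_{e∈B} w(e). -/
open scoped BigOperators

/-- `B` is a base of the contraction `M/S`: it is a maximal subset of `M.E \ S`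
whose union with `S` is independent in `M`. -/
def Matroid.ContractBase {α : Type*} (M : Matroid α) (S B : Set α) : Prop :=
  Maximal (fun I => I ⊆ M.E \ S ∧ M.Indep (I ∪ S)) B

/-- If `w ≥ 0` dominates the marginal values `f (S ∪ {e}) - f S` on
`V \ S` and `B` is a maximum `w`-weight base of the contraction `M/S`, then for every
`S' ⊆ V \ S` with `S' ∪ S` independent, the total marginal value of `S'` is at most
the `w`-weight of `B`. -/
theorem stmt2 {α : Type*} (M : Matroid α) [M.Finite] (S : Set α) (hS : M.Indep S)
    (f : Set α → ℝ)
    (hsub : ∀ A ⊆ M.E, ∀ B ⊆ M.E, f A + f B ≥ f (A ∩ B) + f (A ∪ B))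
    (hmono : ∀ A B : Set α, A ⊆ B → B ⊆ M.E → f A ≤ f B)
    (w : α → ℝ)
    (hw : ∀ e ∈ M.E \ S, 0 ≤ w e ∧ f (insert e S) - f S ≤ w e)
    (B : Set α) (hB : M.ContractBase S B)
    (hBmax : ∀ B', M.ContractBase S B' → ∑ᶠ e ∈ B', w e ≤ ∑ᶠ e ∈ B, w e) :
    ∀ S' ⊆ M.E \ S, M.Indep (S' ∪ S) →
      ∑ᶠ e ∈ S', (f (insert e S) - f S) ≤ ∑ᶠ e ∈ B, w e := by
  intro S' hS' hind
  obtain ⟨J, hJ, hsubJ⟩ := Matroid.Indep.exists_isBase_superset hind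
  have hSJ : S ⊆ J := (Set.union_subset_iff.mp hsubJ).2
  have hS'J : S' ⊆ J := (Set.union_subset_iff.mp hsubJ).1
  have hJE : J ⊆ M.E := hJ.subset_ground
  set B' := J \ S with hB'def
  have hB'P : B' ⊆ M.E \ S ∧ M.Indep (B' ∪ S) := by
    constructor
    · exact Set.diff_subset_diff_left hJE
    · rw [hB'def, Set.diff_union_of_subset hSJ]
      exact hJ.indep
  have hCB' : M.ContractBase S B' := by
    refine ⟨hB'P, ?_⟩
    intro C hC hle
    have hJC : J ⊆ C ∪ S := by
      rw [← Set.diff_union_of_subset hSJ]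
      exact Set.union_subset_union_left S hle
    have hJeq : J = C ∪ S := hJ.eq_of_subset_indep hC.2 hJC
    intro x hx
    exact ⟨by rw [hJeq]; exact Or.inl hx, (hC.1 hx).2⟩
  have hS'B' : S' ⊆ B' := fun x hx => ⟨hS'J hx, (hS' hx).2⟩
  have hfin2 : B'.Finite := (M.ground_finite.subset hJE).subset Set.diff_subset
  have hfin1 : S'.Finite := hfin2.subset hS'B'
  calc ∑ᶠ e ∈ S', (f (insert e S) - f S)
      ≤ ∑ᶠ e ∈ S', w e := by
        rw [finsum_mem_eq_finite_toFinset_sum _ hfin1,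
          finsum_mem_eq_finite_toFinset_sum _ hfin1]
        refine Finset.sum_le_sum fun e he => ?_
        exact (hw e (hS' (hfin1.mem_toFinset.mp he))).2
    _ ≤ ∑ᶠ e ∈ B', w e := by
        rw [finsum_mem_eq_finite_toFinset_sum _ hfin1,
          finsum_mem_eq_finite_toFinset_sum _ hfin2]
        refine Finset.sum_le_sum_of_subset_of_nonneg ?_ fun e he _ => ?_
        · intro e he
          exact hfin2.mem_toFinset.mpr (hS'B' (hfin1.mem_toFinset.mp he))
        · exact (hw e (hB'P.1 (hfin2.mem_toFinset.mp he))).1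
    _ ≤ ∑ᶠ e ∈ B, w e := hBmax B' hCB'
end

section
/- Let M be a matroid on a finite ground set V, let w : V → ℝ be a weight function, and let B be a base of M that maximizes Σ_{e∈B} w(e) over all bases of M. Then for every subset S ⊆ B, the set B \ S is a base of the contraction M/S that maximizes Σ_{e∈B'} w(e) over all bases B' of M/S. -/
open scoped BigOperators

/-- If `B` is a maximum `w`-weight base of `M`, then for every `S ⊆ B`,
the set `B \ S` is a maximum `w`-weight base of the contraction `M/S`. -/
theorem stmt3 {α : Type*} (M : Matroid α) [M.Finite] (w : α → ℝ)
    (B : Set α) (hB : M.IsBase B)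
    (hBmax : ∀ B', M.IsBase B' → ∑ᶠ e ∈ B', w e ≤ ∑ᶠ e ∈ B, w e) :
    ∀ S ⊆ B, M.ContractBase S (B \ S) ∧
      ∀ B', M.ContractBase S B' → ∑ᶠ e ∈ B', w e ≤ ∑ᶠ e ∈ B \ S, w e := by
  intro S hSB
  have hBE : B ⊆ M.E := hB.subset_ground
  have hBSB : (B \ S) ∪ S = B := Set.diff_union_of_subset hSB
  constructor
  · constructor
    · refine ⟨fun x hx => ⟨hBE hx.1, hx.2⟩, ?_⟩
      rw [hBSB]; exact hB.indep
    · rintro I ⟨hIE, hIind⟩ hsub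
      have hBsub : B ⊆ I ∪ S := by
        rw [← hBSB]; exact Set.union_subset_union_left S hsub
      have : I ∪ S = B := (hB.eq_of_subset_indep hIind hBsub).symm
      intro x hx
      exact ⟨this ▸ Set.mem_union_left S hx, (hIE hx).2⟩
  · intro B' hB'
    -- B' ∪ S is a base of M
    have hB'E := hB'.1.1
    have hB'ind := hB'.1.2
    have hbase : M.IsBase (B' ∪ S) := by
      refine Matroid.Indep.isBase_of_forall_insert hB'ind fun e he hins => ?_
      have heB' : e ∉ B' := fun h => he.2 (Set.mem_union_left S h)
      have heS : e ∉ S := fun h => he.2 (Set.mem_union_right B' h)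
      have h1 : insert e B' ⊆ M.E \ S := by
        rintro x (rfl | hx)
        · exact ⟨he.1, heS⟩
        · exact hB'E hx
      have h2 : M.Indep (insert e B' ∪ S) := by
        rw [Set.insert_union]; exact hins
      have := hB'.2 ⟨h1, h2⟩ (Set.subset_insert e B')
      exact heB' (this (Set.mem_insert e B'))
    have hle := hBmax _ hbase
    have hSfin : S.Finite := M.ground_finite.subset (hSB.trans hBE)
    have hB'fin : B'.Finite := M.ground_finite.subset (fun x hx => (hB'E hx).1)
    have hBfin : B.Finite := M.ground_finite.subset hBE
    have hd1 : Disjoint B' S := Set.disjoint_left.mpr fun x hx => (hB'E hx).2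
    have hd2 : Disjoint (B \ S) S := Set.disjoint_sdiff_left
    rw [finsum_mem_union hd1 hB'fin hSfin] at hle
    have : ∑ᶠ e ∈ B, w e = ∑ᶠ e ∈ B \ S, w e + ∑ᶠ e ∈ S, w e := by
      rw [← finsum_mem_union hd2 (hBfin.diff (t := S)) hSfin, hBSB]
    rw [this] at hle
    linarith
end

section
/- Let M be a matroid on a finite ground set V, let e ∈ V, and let w, w' : V → ℝ be weight functions with w'(e) = w(e) and w'(x) ≤ w(x) for all x ∈ V with x ≠ e. If B is a base of M maximizing Σ_{x∈B} w(x) over all bases and e ∈ B, then there exists a base B' of M with e ∈ B' that maximizes Σ_{x∈B'} w'(x) over all bases of M. -/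
open scoped BigOperators

open Set

private lemma finsum_mem_eq_add_diff {α : Type*} {S : Set α} (hS : S.Finite) {f : α}
    (hf : f ∈ S) (g : α → ℝ) : ∑ᶠ x ∈ S, g x = g f + ∑ᶠ x ∈ S \ {f}, g x := by
  conv_lhs => rw [show S = insert f (S \ {f}) by simp [insert_eq_of_mem hf,
    insert_diff_singleton]]
  exact finsum_mem_insert g (by simp) hS.sdiff

/-- Symmetric exchange for matroid bases. -/
private lemma sym_exchange {α : Type*} {M : Matroid α} {B₁ B₂ : Set α} {e : α}
    (hB₁ : M.IsBase B₁) (hB₂ : M.IsBase B₂) (heB₁ : e ∈ B₁) (heB₂ : e ∉ B₂) :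
    ∃ f ∈ B₂ \ B₁, M.IsBase (insert e (B₂ \ {f})) ∧ M.IsBase (insert f (B₁ \ {e})) := by
  set F := M.closure (B₁ \ {e}) with hF
  have heF : e ∉ F := hB₁.indep.notMem_closure_diff_of_mem heB₁
  have heE : e ∈ M.E := hB₁.subset_ground heB₁
  have hsubF : B₂ ∩ F ⊆ M.E := inter_subset_left.trans hB₂.subset_ground
  have hclF : M.closure (B₂ ∩ F) ⊆ F := by
    have := M.closure_subset_closure (inter_subset_right (s := B₂) (t := F))
    rwa [hF, M.closure_closure] at this
  have hIindep : M.Indep (insert e (B₂ ∩ F)) := by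
    rw [(hB₂.indep.subset inter_subset_left).insert_indep_iff_of_notMem
      (fun h ↦ heB₂ h.1)]
    exact ⟨heE, fun h ↦ heF (hclF h)⟩
  obtain ⟨B₃, hB₃, hIB₃, hB₃sub⟩ := hIindep.exists_isBase_subset_union_isBase hB₂
  have hB₃sub' : B₃ ⊆ insert e B₂ := by
    refine hB₃sub.trans ?_
    rw [insert_union]
    exact insert_subset_insert (union_subset inter_subset_left Subset.rfl)
  have heB₃ : e ∈ B₃ := hIB₃ (mem_insert _ _)
  have hdiff : B₃ \ B₂ = {e} := by
    apply Subset.antisymm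
    · intro x hx
      rcases hB₃sub' hx.1 with h | h
      · exact h
      · exact absurd h hx.2
    · exact singleton_subset_iff.2 ⟨heB₃, heB₂⟩
  have hcard : (B₂ \ B₃).encard = 1 := by
    rw [hB₂.encard_diff_comm hB₃, hdiff, encard_singleton]
  obtain ⟨f, hfeq⟩ := encard_eq_one.1 hcard
  have hfB₂ : f ∈ B₂ := (hfeq.symm ▸ (mem_singleton f) : f ∈ B₂ \ B₃).1
  have hfB₃ : f ∉ B₃ := (hfeq.symm ▸ (mem_singleton f) : f ∈ B₂ \ B₃).2
  have hfF : f ∉ F := fun h ↦ hfB₃ (hIB₃ (mem_insert_of_mem _ ⟨hfB₂, h⟩))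
  have hfB₁ : f ∉ B₁ := by
    intro h
    have hfe : f ≠ e := fun h' ↦ heB₂ (h' ▸ hfB₂)
    exact hfF (M.subset_closure (B₁ \ {e}) ((diff_subset.trans hB₁.subset_ground))
      ⟨h, hfe⟩)
  have hB₃eq : B₃ = insert e (B₂ \ {f}) := by
    ext x
    constructor
    · intro hx
      rcases hB₃sub' hx with h | h
      · exact h ▸ mem_insert _ _
      · refine mem_insert_of_mem _ ⟨h, fun hxf ↦ hfB₃ (hxf ▸ hx)⟩
    · rintro (rfl | ⟨hx₂, hxf⟩)
      · exact heB₃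
      · by_contra hx₃
        exact hxf (hfeq ▸ (⟨hx₂, hx₃⟩ : x ∈ B₂ \ B₃))
  refine ⟨f, ⟨hfB₂, hfB₁⟩, hB₃eq ▸ hB₃, ?_⟩
  refine hB₁.exchange_isBase_of_indep hfB₁ ?_
  rw [(hB₁.indep.subset diff_subset).insert_indep_iff_of_notMem
    (fun h ↦ hfB₁ h.1)]
  exact ⟨hB₂.subset_ground hfB₂, hfF⟩

/-- If the weight of `e` is unchanged (`w' e = w e`) and all other weights
only decrease (`w' x ≤ w x`), then an element `e` belonging to a maximum `w`-weight base
also belongs to some maximum `w'`-weight base. -/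
theorem stmt4 {α : Type*} (M : Matroid α) [M.Finite] (e : α) (he : e ∈ M.E)
    (w w' : α → ℝ) (hwe : w' e = w e) (hww : ∀ x ∈ M.E, x ≠ e → w' x ≤ w x)
    (B : Set α) (hB : M.IsBase B)
    (hBmax : ∀ C, M.IsBase C → ∑ᶠ x ∈ C, w x ≤ ∑ᶠ x ∈ B, w x)
    (heB : e ∈ B) :
    ∃ B', M.IsBase B' ∧ e ∈ B' ∧
      ∀ C, M.IsBase C → ∑ᶠ x ∈ C, w' x ≤ ∑ᶠ x ∈ B', w' x := by
  -- choose a w'-maximal base B'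
  have hbfin : {C : Set α | M.IsBase C}.Finite :=
    M.ground_finite.finite_subsets.subset (fun C hC ↦ hC.subset_ground)
  obtain ⟨B', hB', hB'max⟩ := hbfin.exists_maximalFor (fun C ↦ ∑ᶠ x ∈ C, w' x)
    _ ⟨B, hB⟩
  have hB'max' : ∀ C, M.IsBase C → ∑ᶠ x ∈ C, w' x ≤ ∑ᶠ x ∈ B', w' x := by
    intro C hC
    by_contra h
    push_neg at h
    exact absurd (hB'max hC h.le) (not_le.2 h)
  by_cases heB' : e ∈ B'
  · exact ⟨B', hB', heB', hB'max'⟩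
  obtain ⟨f, ⟨hfB', hfB⟩, hbase₁, hbase₂⟩ := sym_exchange hB hB' heB heB'
  have hBfin : B.Finite := M.set_finite B hB.subset_ground
  have hB'fin : B'.Finite := M.set_finite B' hB'.subset_ground
  have hfe : f ≠ e := fun h ↦ hfB (h ▸ heB)
  -- from w-maximality of B : w f ≤ w e
  have hwfe : w f ≤ w e := by
    have h1 := hBmax _ hbase₂
    rw [finsum_mem_insert w (fun h ↦ hfB h.1) hBfin.sdiff,
      finsum_mem_eq_add_diff hBfin heB w] at h1
    linarith
  -- hence w' f ≤ w' e
  have hwfe' : w' f ≤ w' e := by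
    have := hww f (hB'.subset_ground hfB') hfe
    linarith [hwe ▸ hwfe]
  -- so the exchanged base insert e (B' \ {f}) is also w'-maximal
  refine ⟨insert e (B' \ {f}), hbase₁, mem_insert _ _, fun C hC ↦ ?_⟩
  have hsum : ∑ᶠ x ∈ insert e (B' \ {f}), w' x
      = w' e + (∑ᶠ x ∈ B', w' x - w' f) := by
    rw [finsum_mem_insert w' (fun h ↦ heB' h.1) hB'fin.sdiff,
      finsum_mem_eq_add_diff hB'fin hfB' w']
    ring
  calc ∑ᶠ x ∈ C, w' x ≤ ∑ᶠ x ∈ B', w' x := hB'max' C hC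
    _ ≤ w' e + (∑ᶠ x ∈ B', w' x - w' f) := by linarith
    _ = _ := hsum.symm
end

section
/- Let ε ∈ (0, 1/4], let c ≥ 1 and M₀ > 0 be real numbers, and let k ≥ 1 and N ≥ 1 be integers with (1−ε)^N ≤ (ε/k)². Let V be a finite set, let f : 2^V → ℝ be monotone submodular with f(∅) ≥ 0, and let S ⊆ V. Let B ⊆ V \ S be nonempty with |B| ≤ k, and let w : B → ℝ satisfy: (i) f(S ∪ {e}) − f(S) ≤ w(e) for every e ∈ B; (ii) every e ∈ B either satisfies w(e) = (1−ε)^{j−1} M₀ for some j ∈ {1,…,N} (in which case we say e lies in bucket j) or satisfies 0 ≤ w(e) ≤ (1−ε)^N M₀; (iii) for each j ∈ {1,…,N}, at least half of the elements e of bucket j satisfy f(S ∪ {e}) − f(S) ≥ (1−ε) w(e); and (iv) Σ_{e∈B} w(e) ≥ 4 c M₀. Then for every nonempty set O ⊆ V with |O| = |B| and f(O) ≤ M₀, it holds that (1/|B|) Σ_{e∈B} (f(S ∪ {e}) − f(S)) ≥ (c/|O|) Σ_{o∈O} (f(O) − f(O \ {o})). -/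
open scoped Classical BigOperators

private lemma aux_erase {α : Type*} [DecidableEq α] (f : Finset α → ℝ) (V : Finset α)
    (hsub : ∀ A ⊆ V, ∀ B ⊆ V, f A + f B ≥ f (A ∩ B) + f (A ∪ B))
    {X Y : Finset α} (hY : Y ⊆ V) (hXY : X ⊆ Y) {o : α} (ho : o ∈ X) :
    f Y - f (Y.erase o) ≤ f X - f (X.erase o) := by
  have h := hsub X (hXY.trans hY) (Y.erase o) ((Finset.erase_subset _ _).trans hY)
  have h1 : X ∩ Y.erase o = X.erase o := by
    ext a
    simp only [Finset.mem_inter, Finset.mem_erase]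
    constructor
    · rintro ⟨ha, hne, -⟩; exact ⟨hne, ha⟩
    · rintro ⟨hne, ha⟩; exact ⟨ha, hne, hXY ha⟩
  have h2 : X ∪ Y.erase o = Y := by
    ext a
    simp only [Finset.mem_union, Finset.mem_erase]
    constructor
    · rintro (ha | ⟨-, ha⟩)
      · exact hXY ha
      · exact ha
    · intro ha
      by_cases hao : a = o
      · exact Or.inl (hao ▸ ho)
      · exact Or.inr ⟨hao, ha⟩
  rw [h1, h2] at h
  linarith

private lemma aux_tele {α : Type*} [DecidableEq α] (f : Finset α → ℝ) (V : Finset α)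
    (hsub : ∀ A ⊆ V, ∀ B ⊆ V, f A + f B ≥ f (A ∩ B) + f (A ∪ B)) :
    ∀ O : Finset α, O ⊆ V → ∑ o ∈ O, (f O - f (O.erase o)) ≤ f O - f ∅ := by
  intro O
  induction O using Finset.induction_on with
  | empty => simp
  | @insert a s ha ih =>
    intro hsV
    have hsV' : s ⊆ V := (Finset.subset_insert a s).trans hsV
    have h1 : ∑ o ∈ insert a s, (f (insert a s) - f ((insert a s).erase o)) =
        (f (insert a s) - f ((insert a s).erase a)) +
        ∑ o ∈ s, (f (insert a s) - f ((insert a s).erase o)) :=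
      Finset.sum_insert ha
    have h2 : (insert a s).erase a = s := by
      rw [Finset.erase_insert ha]
    have h3 : ∑ o ∈ s, (f (insert a s) - f ((insert a s).erase o)) ≤
        ∑ o ∈ s, (f s - f (s.erase o)) := by
      apply Finset.sum_le_sum
      intro o ho
      exact aux_erase f V hsub hsV (Finset.subset_insert a s) ho
    have h4 := ih hsV'
    rw [h1, h2]
    linarith

set_option maxHeartbeats 2000000
/-- the key greedy-gain vs. OPT-loss inequality. If the cached weights `w`
on `B ⊆ V \ S` lie on the geometric grid, at least half of each bucket is up to date,
and the total cached weight is at least `4 c M₀`, then the average marginal gain of the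
elements of `B` on top of `S` is at least `c` times the average loss `f O - f (O \ {o})`
for any `O` with `|O| = |B|` and `f O ≤ M₀`. -/
theorem stmt6 {α : Type*} [DecidableEq α] (ε c M₀ : ℝ) (k N : ℕ)
    (hε0 : 0 < ε) (hε1 : ε ≤ 1 / 4) (hc : 1 ≤ c) (hM : 0 < M₀)
    (hk : 1 ≤ k) (hN : 1 ≤ N) (hNk : (1 - ε) ^ N ≤ (ε / k) ^ 2)
    (V : Finset α) (f : Finset α → ℝ)
    (hsub : ∀ A ⊆ V, ∀ B ⊆ V, f A + f B ≥ f (A ∩ B) + f (A ∪ B))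
    (hmono : ∀ A B : Finset α, A ⊆ B → B ⊆ V → f A ≤ f B)
    (hf0 : f ∅ ≥ 0)
    (S : Finset α) (hS : S ⊆ V)
    (B : Finset α) (hBsub : B ⊆ V \ S) (hBne : B.Nonempty) (hBk : B.card ≤ k)
    (w : α → ℝ)
    (hwub : ∀ e ∈ B, f (insert e S) - f S ≤ w e)
    (hbucket : ∀ e ∈ B,
      (∃ j ∈ Finset.Icc 1 N, w e = (1 - ε) ^ (j - 1) * M₀) ∨
      (0 ≤ w e ∧ w e ≤ (1 - ε) ^ N * M₀))
    (hhalf : ∀ j ∈ Finset.Icc 1 N,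
      (B.filter (fun e => w e = (1 - ε) ^ (j - 1) * M₀)).card ≤
        2 * (B.filter (fun e => w e = (1 - ε) ^ (j - 1) * M₀ ∧
          f (insert e S) - f S ≥ (1 - ε) * w e)).card)
    (hwsum : ∑ e ∈ B, w e ≥ 4 * c * M₀) :
    ∀ O ⊆ V, O.Nonempty → O.card = B.card → f O ≤ M₀ →
      (1 / (B.card : ℝ)) * ∑ e ∈ B, (f (insert e S) - f S) ≥
        (c / (O.card : ℝ)) * ∑ o ∈ O, (f O - f (O.erase o)) := by
  intro O hOV hOne hOcard hOM
  have h1ε : 0 < 1 - ε := by linarith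
  have hBcard : 0 < (B.card : ℝ) := by
    exact_mod_cast Finset.card_pos.mpr hBne
  -- elements of B are in V \ S
  have hgain0 : ∀ e ∈ B, 0 ≤ f (insert e S) - f S := by
    intro e he
    have heV : e ∈ V := (Finset.mem_sdiff.mp (hBsub he)).1
    have : f S ≤ f (insert e S) := by
      apply hmono S (insert e S) (Finset.subset_insert e S)
      intro x hx
      rcases Finset.mem_insert.mp hx with h | h
      · exact h ▸ heV
      · exact hS h
    linarith
  -- RHS sum bound
  have hsumO : ∑ o ∈ O, (f O - f (O.erase o)) ≤ M₀ := by
    have := aux_tele f V hsub O hOV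
    linarith
  -- notation
  set v : ℕ → ℝ := fun j => (1 - ε) ^ (j - 1) * M₀ with hv
  set Bj : ℕ → Finset α := fun j => B.filter (fun e => w e = v j) with hBj
  set Gj : ℕ → Finset α := fun j => B.filter (fun e => w e = v j ∧
    f (insert e S) - f S ≥ (1 - ε) * w e) with hGj
  have hvpos : ∀ j, 0 < v j := by
    intro j
    exact mul_pos (pow_pos h1ε _) hM
  have hvne : ∀ j ∈ Finset.Icc 1 N, ∀ j' ∈ Finset.Icc 1 N, j ≠ j' → v j ≠ v j' := by
    intro j hj j' hj' hne
    simp only [Finset.mem_Icc] at hj hj'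
    have hlt1 : 1 - ε < 1 := by linarith
    have key : ∀ a b : ℕ, a < b → (1 - ε) ^ b < (1 - ε) ^ a := fun a b hab =>
      pow_lt_pow_right_of_lt_one₀ h1ε hlt1 hab
    have hne' : j - 1 ≠ j' - 1 := by omega
    rcases lt_or_gt_of_ne hne' with h | h
    · have := key _ _ h
      simp only [hv]
      intro hcon
      have := mul_right_cancel₀ (ne_of_gt hM) hcon
      linarith
    · have := key _ _ h
      simp only [hv]
      intro hcon
      have := mul_right_cancel₀ (ne_of_gt hM) hcon
      linarith
  have hGdisj : ((Finset.Icc 1 N : Finset ℕ) : Set ℕ).PairwiseDisjoint Gj := by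
    intro j hj j' hj' hne
    simp only [Set.mem_setOf_eq, Finset.coe_Icc] at hj hj'
    apply Finset.disjoint_left.mpr
    intro e he he'
    simp only [hGj, Finset.mem_filter] at he he'
    have hjI : j ∈ Finset.Icc 1 N := by simpa using hj
    have hj'I : j' ∈ Finset.Icc 1 N := by simpa using hj'
    exact hvne j hjI j' hj'I hne (he.2.1 ▸ he'.2.1)
  have hBdisj : ((Finset.Icc 1 N : Finset ℕ) : Set ℕ).PairwiseDisjoint Bj := by
    intro j hj j' hj' hne
    simp only [Finset.coe_Icc] at hj hj'
    apply Finset.disjoint_left.mpr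
    intro e he he'
    simp only [hBj, Finset.mem_filter] at he he'
    have hjI : j ∈ Finset.Icc 1 N := by simpa using hj
    have hj'I : j' ∈ Finset.Icc 1 N := by simpa using hj'
    exact hvne j hjI j' hj'I hne (he.2 ▸ he'.2)
  -- Key gain bound
  have hT : ∀ j ∈ Finset.Icc 1 N, ∑ e ∈ Bj j, w e = (Bj j).card * v j := by
    intro j hj
    rw [Finset.sum_congr rfl (fun e he => (Finset.mem_filter.mp he).2), Finset.sum_const]
    simp [nsmul_eq_mul]
    exact Or.inl rfl
  have hUsub : (Finset.Icc 1 N).biUnion Bj ⊆ B := by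
    intro e he
    rw [Finset.mem_biUnion] at he
    obtain ⟨j, _, he⟩ := he
    simp only [hBj, Finset.mem_filter] at he
    exact he.1
  have hsplit : ∑ e ∈ B \ (Finset.Icc 1 N).biUnion Bj, w e +
      ∑ e ∈ (Finset.Icc 1 N).biUnion Bj, w e = ∑ e ∈ B, w e :=
    Finset.sum_sdiff hUsub
  have hsmall : ∑ e ∈ B \ (Finset.Icc 1 N).biUnion Bj, w e ≤ ε ^ 2 / k * M₀ := by
    have hb : ∀ e ∈ B \ (Finset.Icc 1 N).biUnion Bj, w e ≤ (1 - ε) ^ N * M₀ := by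
      intro e he
      rw [Finset.mem_sdiff] at he
      rcases hbucket e he.1 with ⟨j, hj, hw⟩ | h
      · exfalso
        apply he.2
        rw [Finset.mem_biUnion]
        exact ⟨j, hj, by simp only [hBj, Finset.mem_filter]; exact ⟨he.1, hw⟩⟩
      · exact h.2
    calc ∑ e ∈ B \ (Finset.Icc 1 N).biUnion Bj, w e
        ≤ (B \ (Finset.Icc 1 N).biUnion Bj).card • ((1 - ε) ^ N * M₀) :=
          Finset.sum_le_card_nsmul _ _ _ hb
      _ ≤ (k : ℝ) * ((1 - ε) ^ N * M₀) := by
          rw [nsmul_eq_mul]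
          apply mul_le_mul_of_nonneg_right
          · exact_mod_cast le_trans (Finset.card_le_card (Finset.sdiff_subset)) hBk
          · positivity
      _ ≤ (k : ℝ) * ((ε / k) ^ 2 * M₀) := by
          apply mul_le_mul_of_nonneg_left _ (by positivity)
          exact mul_le_mul_of_nonneg_right hNk hM.le
      _ = ε ^ 2 / k * M₀ := by
          have hk0 : (k : ℝ) ≠ 0 := by positivity
          field_simp
  have hsumP : ∑ e ∈ (Finset.Icc 1 N).biUnion Bj, w e =
      ∑ j ∈ Finset.Icc 1 N, ((Bj j).card : ℝ) * v j := by
    rw [Finset.sum_biUnion hBdisj]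
    exact Finset.sum_congr rfl hT
  have hTbig : ∑ j ∈ Finset.Icc 1 N, ((Bj j).card : ℝ) * v j ≥ 4 * c * M₀ - ε ^ 2 / k * M₀ := by
    rw [← hsumP]
    linarith [hsplit, hsmall, hwsum]
  -- gain lower bound through good sets
  have hgainG : ∀ j ∈ Finset.Icc 1 N,
      ∑ e ∈ Gj j, (f (insert e S) - f S) ≥ ((Gj j).card : ℝ) * ((1 - ε) * v j) := by
    intro j hj
    have : ∀ e ∈ Gj j, (1 - ε) * v j ≤ f (insert e S) - f S := by
      intro e he
      rw [hGj, Finset.mem_filter] at he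
      calc (1 - ε) * v j = (1 - ε) * w e := by rw [he.2.1]
        _ ≤ f (insert e S) - f S := he.2.2
    have := Finset.card_nsmul_le_sum (Gj j) (fun e => f (insert e S) - f S) _ this
    rw [nsmul_eq_mul] at this
    exact this
  have hGcard : ∀ j ∈ Finset.Icc 1 N, ((Bj j).card : ℝ) ≤ 2 * ((Gj j).card : ℝ) := by
    intro j hj
    exact_mod_cast hhalf j hj
  have hGsub : (Finset.Icc 1 N).biUnion Gj ⊆ B := by
    intro e he
    rw [Finset.mem_biUnion] at he
    obtain ⟨j, hj, he⟩ := he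
    exact Finset.filter_subset _ _ he
  have hmain : ∑ e ∈ B, (f (insert e S) - f S) ≥
      (1 - ε) / 2 * ∑ j ∈ Finset.Icc 1 N, ((Bj j).card : ℝ) * v j := by
    calc ∑ e ∈ B, (f (insert e S) - f S)
        ≥ ∑ e ∈ (Finset.Icc 1 N).biUnion Gj, (f (insert e S) - f S) := by
          apply Finset.sum_le_sum_of_subset_of_nonneg hGsub
          intro e heB _
          exact hgain0 e heB
      _ = ∑ j ∈ Finset.Icc 1 N, ∑ e ∈ Gj j, (f (insert e S) - f S) :=
          Finset.sum_biUnion hGdisj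
      _ ≥ ∑ j ∈ Finset.Icc 1 N, ((Gj j).card : ℝ) * ((1 - ε) * v j) :=
          Finset.sum_le_sum hgainG
      _ ≥ ∑ j ∈ Finset.Icc 1 N, (1 - ε) / 2 * (((Bj j).card : ℝ) * v j) := by
          apply Finset.sum_le_sum
          intro j hj
          have h1 := hGcard j hj
          have h2 := (hvpos j).le
          have h3 : (1 - ε) / 2 * (((Bj j).card : ℝ) * v j) ≤
              (1 - ε) / 2 * ((2 * ((Gj j).card : ℝ)) * v j) := by
            apply mul_le_mul_of_nonneg_left _ (by linarith)
            exact mul_le_mul_of_nonneg_right h1 h2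
          have h4 : (1 - ε) / 2 * ((2 * ((Gj j).card : ℝ)) * v j) =
              ((Gj j).card : ℝ) * ((1 - ε) * v j) := by ring
          linarith
      _ = (1 - ε) / 2 * ∑ j ∈ Finset.Icc 1 N, ((Bj j).card : ℝ) * v j :=
          (Finset.mul_sum _ _ _).symm
  -- numeric conclusion: total gain ≥ c * M₀
  have hkR : (1 : ℝ) ≤ (k : ℝ) := by exact_mod_cast hk
  have hsmall2 : ε ^ 2 / k * M₀ ≤ M₀ / 16 := by
    have h1 : ε ^ 2 ≤ 1 / 16 := by nlinarith
    have h2 : ε ^ 2 / k ≤ ε ^ 2 := by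
      apply div_le_self (by positivity) hkR
    have : ε ^ 2 / k ≤ 1 / 16 := le_trans h2 h1
    nlinarith
  have hgainTotal : ∑ e ∈ B, (f (insert e S) - f S) ≥ c * M₀ := by
    set T := ∑ j ∈ Finset.Icc 1 N, ((Bj j).card : ℝ) * v j with hTdef
    have hcM : M₀ ≤ c * M₀ := by nlinarith
    have hcM0 : 0 < c * M₀ := by nlinarith
    have hT2 : T ≥ 63 / 16 * (c * M₀) := by linarith
    have hTpos : 0 ≤ T := by linarith
    have h38 : 3 / 8 ≤ (1 - ε) / 2 := by linarith
    have step : 3 / 8 * T ≤ (1 - ε) / 2 * T := mul_le_mul_of_nonneg_right h38 hTpos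
    have step2 : 3 / 8 * (63 / 16 * (c * M₀)) ≤ 3 / 8 * T := by linarith
    linarith
  -- final comparison
  rw [hOcard]
  have step1 : (c / (B.card : ℝ)) * ∑ o ∈ O, (f O - f (O.erase o)) ≤
      (c / (B.card : ℝ)) * M₀ := by
    apply mul_le_mul_of_nonneg_left hsumO
    positivity
  have step2 : (1 / (B.card : ℝ)) * (c * M₀) ≤
      (1 / (B.card : ℝ)) * ∑ e ∈ B, (f (insert e S) - f S) := by
    apply mul_le_mul_of_nonneg_left hgainTotal
    positivity
  have heq : (1 / (B.card : ℝ)) * (c * M₀) = (c / (B.card : ℝ)) * M₀ := by ring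
  linarith
end

section
/- Let G be a finite connected simple graph, let T₁ and T₂ be spanning trees of G, let v be a vertex of degree 1 in T₁ whose unique incident edge in T₁ is e = {v, u}, and suppose e ∉ T₂. Let w be the vertex adjacent to v on the unique path in T₂ from v to u, and let f = {v, w} ∈ T₂. Then both (T₁ \ {e}) ∪ {f} and (T₂ \ {f}) ∪ {e} are spanning trees of G. Moreover, f is the unique edge of T₂ incident to v whose other endpoint lies on the unique path in T₂ from v to u. -/
/-- `T` is (the edge set of) a spanning tree of `G`: a set of edges of `G` such that the
graph on the vertices of `G` with edge set `T` is a tree. -/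
def IsSpanningTreeEdges {V : Type*} (G : SimpleGraph V) (T : Set (Sym2 V)) : Prop :=
  T ⊆ G.edgeSet ∧ (SimpleGraph.fromEdgeSet T).IsTree

open SimpleGraph Walk in
/-- let `v` be a leaf of the spanning tree `T₁` with unique incident edge
`e = s(v, u)`, with `e ∉ T₂`. Let `w` be the vertex adjacent to `v` on the unique path
`p` from `v` to `u` in `T₂`, so `f = s(v, w) ∈ T₂`. Then both `(T₁ \ {e}) ∪ {f}` and
`(T₂ \ {f}) ∪ {e}` are spanning trees of `G`, and `f` is the unique edge of `T₂`
incident to `v` whose other endpoint lies on the path `p`. -/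
theorem stmt8 {V : Type*} [Fintype V] (G : SimpleGraph V) (hG : G.Connected)
    (T₁ T₂ : Set (Sym2 V))
    (hT₁ : IsSpanningTreeEdges G T₁) (hT₂ : IsSpanningTreeEdges G T₂)
    (v u : V) (he : s(v, u) ∈ T₁)
    (hleaf : ∀ f ∈ T₁, v ∈ f → f = s(v, u))
    (heT₂ : s(v, u) ∉ T₂)
    (p : (SimpleGraph.fromEdgeSet T₂).Walk v u) (hp : p.IsPath)
    (w : V) (hw : s(v, w) ∈ T₂)
    (hadj : p.support[1]? = some w) :
    IsSpanningTreeEdges G ((T₁ \ {s(v, u)}) ∪ {s(v, w)}) ∧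
    IsSpanningTreeEdges G ((T₂ \ {s(v, w)}) ∪ {s(v, u)}) ∧
    ∀ w' : V, s(v, w') ∈ T₂ → w' ∈ p.support → w' = w := by
  classical
  obtain ⟨hT₁G, hH₁⟩ := hT₁
  obtain ⟨hT₂G, hH₂⟩ := hT₂
  have hE : ∀ T : Set (Sym2 V), T ⊆ G.edgeSet →
      (SimpleGraph.fromEdgeSet T).edgeSet = T := by
    intro T hT
    rw [SimpleGraph.edgeSet_fromEdgeSet]
    ext a
    simp only [Set.mem_diff, Set.mem_setOf_eq, and_iff_left_iff_imp]
    exact fun ha => G.not_isDiag_of_mem_edgeSet (hT ha)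
  have hvu : v ≠ u := fun h =>
    G.not_isDiag_of_mem_edgeSet (hT₁G he) (Sym2.mk_isDiag_iff.mpr h)
  have hvw : v ≠ w := fun h =>
    G.not_isDiag_of_mem_edgeSet (hT₂G hw) (Sym2.mk_isDiag_iff.mpr h)
  have hwu : w ≠ u := fun h => heT₂ (h ▸ hw)
  -- decompose p
  obtain ⟨y, hy, p', hpe⟩ := Walk.exists_eq_cons_of_ne hvu p
  subst hpe
  have hyw : w = y := by
    have h2 := hadj
    rw [Walk.support_cons, Walk.support_eq_cons p'] at h2
    simpa using h2.symm
  subst hyw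
  obtain ⟨hp', hvp'⟩ := (Walk.cons_isPath_iff _ _).mp hp
  have hfp' : s(v, w) ∉ p'.edges := fun h =>
    hvp' (Walk.fst_mem_support_of_mem_edges p' h)
  -- edge sets of the two new graphs
  have hAsub : ((T₁ \ {s(v, u)}) ∪ {s(v, w)}) ⊆ G.edgeSet := by
    rintro a (ha | ha)
    · exact hT₁G ha.1
    · rw [Set.mem_singleton_iff] at ha; exact ha ▸ hT₂G hw
  have hBsub : ((T₂ \ {s(v, w)}) ∪ {s(v, u)}) ⊆ G.edgeSet := by
    rintro a (ha | ha)
    · exact hT₂G ha.1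
    · rw [Set.mem_singleton_iff] at ha; exact ha ▸ hT₁G he
  set A := SimpleGraph.fromEdgeSet ((T₁ \ {s(v, u)}) ∪ {s(v, w)}) with hAdef
  set B := SimpleGraph.fromEdgeSet ((T₂ \ {s(v, w)}) ∪ {s(v, u)}) with hBdef
  have hAE : A.edgeSet = (T₁ \ {s(v, u)}) ∪ {s(v, w)} := hE _ hAsub
  have hBE : B.edgeSet = (T₂ \ {s(v, w)}) ∪ {s(v, u)} := hE _ hBsub
  have hH₁E : (SimpleGraph.fromEdgeSet T₁).edgeSet = T₁ := hE _ hT₁G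
  have hH₂E : (SimpleGraph.fromEdgeSet T₂).edgeSet = T₂ := hE _ hT₂G
  -- key lemma: from any x ≠ v there is a walk to u in (SimpleGraph.fromEdgeSet T₁) avoiding the edge s(v,u)
  have key₁ : ∀ x, x ≠ v → ∃ q : (SimpleGraph.fromEdgeSet T₁).Walk x u, s(v, u) ∉ q.edges := by
    intro x hx
    obtain ⟨r0⟩ := hH₁.isConnected.preconnected x v
    have hr : r0.toPath.1.reverse.IsPath := r0.toPath.2.reverse
    obtain ⟨z, hz, q₀, hq⟩ := Walk.exists_eq_cons_of_ne (Ne.symm hx) r0.toPath.1.reverse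
    have hzT : s(v, z) ∈ T₁ := by
      have := hz.symm; rw [SimpleGraph.fromEdgeSet_adj] at hz
      exact hz.1
    have hzu : z = u := Sym2.congr_right.mp (hleaf _ hzT (Sym2.mem_mk_left _ _))
    subst hzu
    rw [hq] at hr
    obtain ⟨-, hvq₀⟩ := (Walk.cons_isPath_iff _ _).mp hr
    refine ⟨q₀.reverse, fun h => ?_⟩
    rw [Walk.edges_reverse, List.mem_reverse] at h
    exact hvq₀ (Walk.fst_mem_support_of_mem_edges q₀ h)
  -- key lemma: from any x ≠ v there is a walk in (SimpleGraph.fromEdgeSet T₂) avoiding the edge s(v,w),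
  -- ending at v or at w
  have key₂ : ∀ x, x ≠ v →
      (∃ q : (SimpleGraph.fromEdgeSet T₂).Walk x v, s(v, w) ∉ q.edges) ∨ (∃ q : (SimpleGraph.fromEdgeSet T₂).Walk x w, s(v, w) ∉ q.edges) := by
    intro x hx
    obtain ⟨r0⟩ := hH₂.isConnected.preconnected x v
    by_cases hfr : s(v, w) ∈ r0.toPath.1.edges
    · right
      have hr : r0.toPath.1.reverse.IsPath := r0.toPath.2.reverse
      obtain ⟨z, hz, q₀, hq⟩ := Walk.exists_eq_cons_of_ne (Ne.symm hx) r0.toPath.1.reverse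
      rw [hq] at hr
      obtain ⟨-, hvq₀⟩ := (Walk.cons_isPath_iff _ _).mp hr
      have hnq₀ : s(v, w) ∉ q₀.edges := fun h =>
        hvq₀ (Walk.fst_mem_support_of_mem_edges q₀ h)
      have hfr' : s(v, w) ∈ r0.toPath.1.reverse.edges := by
        rw [Walk.edges_reverse, List.mem_reverse]; exact hfr
      rw [hq, Walk.edges_cons] at hfr'
      rcases List.mem_cons.mp hfr' with h1 | h1
      · have hzw : z = w := Sym2.congr_right.mp h1.symm
        subst hzw
        refine ⟨q₀.reverse, fun h => hnq₀ ?_⟩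
        rwa [Walk.edges_reverse, List.mem_reverse] at h
      · exact absurd h1 hnq₀
    · exact Or.inl ⟨r0.toPath.1, hfr⟩
  -- connectivity of A
  have hAuw : A.Adj v w := by
    rw [hAdef, SimpleGraph.fromEdgeSet_adj]
    exact ⟨Or.inr rfl, hvw⟩
  have liftA : ∀ {a b : V} (q : (SimpleGraph.fromEdgeSet T₁).Walk a b), s(v, u) ∉ q.edges → A.Walk a b := by
    intro a b q hq
    refine q.transfer A fun e' he' => ?_
    rw [hAE]
    exact Or.inl ⟨hH₁E ▸ q.edges_subset_edgeSet he', fun h => hq (h ▸ he')⟩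
  have hreachA : ∀ x, A.Reachable x u := by
    intro x
    have hwu' : A.Reachable w u := by
      obtain ⟨q, hq⟩ := key₁ w (Ne.symm hvw)
      exact (liftA q hq).reachable
    by_cases hx : x = v
    · subst hx; exact hAuw.reachable.trans hwu'
    · obtain ⟨q, hq⟩ := key₁ x hx
      exact (liftA q hq).reachable
  have hAconn : A.Connected := by
    rw [SimpleGraph.connected_iff]
    exact ⟨fun a b => (hreachA a).trans (hreachA b).symm, ⟨v⟩⟩
  -- connectivity of B
  have hBvu : B.Adj v u := by
    rw [hBdef, SimpleGraph.fromEdgeSet_adj]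
    exact ⟨Or.inr rfl, hvu⟩
  have liftB : ∀ {a b : V} (q : (SimpleGraph.fromEdgeSet T₂).Walk a b), s(v, w) ∉ q.edges → B.Walk a b := by
    intro a b q hq
    refine q.transfer B fun e' he' => ?_
    rw [hBE]
    exact Or.inl ⟨hH₂E ▸ q.edges_subset_edgeSet he', fun h => hq (h ▸ he')⟩
  have hwBu : B.Reachable w u := (liftB p' hfp').reachable
  have hreachB : ∀ x, B.Reachable x u := by
    intro x
    by_cases hx : x = v
    · subst hx; exact hBvu.reachable
    · rcases key₂ x hx with ⟨q, hq⟩ | ⟨q, hq⟩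
      · exact (liftB q hq).reachable.trans hBvu.reachable
      · exact (liftB q hq).reachable.trans hwBu
  have hBconn : B.Connected := by
    rw [SimpleGraph.connected_iff]
    exact ⟨fun a b => (hreachB a).trans (hreachB b).symm, ⟨v⟩⟩
  -- acyclicity of A
  have hAac : A.IsAcyclic := by
    intro a c hc
    by_cases hfc : s(v, w) ∈ c.edges
    · obtain ⟨-, ⟨q⟩⟩ :=
        SimpleGraph.adj_and_reachable_delete_edges_iff_exists_cycle.mpr ⟨a, c, hc, hfc⟩
      obtain ⟨z, hz, q', -⟩ := Walk.exists_eq_cons_of_ne hvw q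
      have hz' : s(v, z) ∈ (A \ SimpleGraph.fromEdgeSet {s(v, w)}).edgeSet := hz
      rw [SimpleGraph.edgeSet_sdiff, hAE,
        hE _ (Set.singleton_subset_iff.mpr (hT₂G hw))] at hz'
      obtain ⟨h1 | h1, h2⟩ := hz'
      · exact h1.2 (hleaf _ h1.1 (Sym2.mem_mk_left _ _))
      · exact h2 h1
    · have hcH : ∀ e' ∈ c.edges, e' ∈ (SimpleGraph.fromEdgeSet T₁).edgeSet := by
        intro e' he'
        have := c.edges_subset_edgeSet he'
        rw [hAE] at this
        rcases this with h1 | h1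
        · rw [hH₁E]; exact h1.1
        · exact absurd (h1 ▸ he') hfc
      exact hH₁.IsAcyclic (c.transfer (SimpleGraph.fromEdgeSet T₁) hcH) (hc.transfer hcH)
  -- acyclicity of B
  have hBac : B.IsAcyclic := by
    intro a c hc
    by_cases hec : s(v, u) ∈ c.edges
    · obtain ⟨-, ⟨q⟩⟩ :=
        SimpleGraph.adj_and_reachable_delete_edges_iff_exists_cycle.mpr ⟨a, c, hc, hec⟩
      have hqE : ∀ e' ∈ q.edges, e' ∈ T₂ \ {s(v, w)} := by
        intro e' he'
        have := q.edges_subset_edgeSet he'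
        rw [SimpleGraph.edgeSet_deleteEdges, hBE] at this
        obtain ⟨h1 | h1, h2⟩ := this
        · exact h1
        · exact absurd h1 h2
      have hqH : ∀ e' ∈ q.edges, e' ∈ (SimpleGraph.fromEdgeSet T₂).edgeSet := fun e' he' =>
        hH₂E.symm ▸ (hqE e' he').1
      set qH := q.transfer (SimpleGraph.fromEdgeSet T₂) hqH with hqHdef
      have hfqH : s(v, w) ∉ (qH.toPath : (SimpleGraph.fromEdgeSet T₂).Walk v u).edges := by
        intro h
        have h2 := qH.edges_toPath_subset h
        rw [hqHdef, Walk.edges_transfer] at h2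
        exact (hqE _ h2).2 rfl
      have huniq := SimpleGraph.isAcyclic_iff_path_unique.mp hH₂.IsAcyclic
        qH.toPath ⟨Walk.cons hy p', hp⟩
      apply hfqH
      rw [show (qH.toPath : (SimpleGraph.fromEdgeSet T₂).Walk v u) = Walk.cons hy p' from congrArg Subtype.val huniq]
      rw [Walk.edges_cons]
      exact List.mem_cons_self
    · have hcH : ∀ e' ∈ c.edges, e' ∈ (SimpleGraph.fromEdgeSet T₂).edgeSet := by
        intro e' he'
        have := c.edges_subset_edgeSet he'
        rw [hBE] at this
        rcases this with h1 | h1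
        · rw [hH₂E]; exact h1.1
        · exact absurd (h1 ▸ he') hec
      exact hH₂.IsAcyclic (c.transfer (SimpleGraph.fromEdgeSet T₂) hcH) (hc.transfer hcH)
  refine ⟨⟨hAsub, hAconn, hAac⟩, ⟨hBsub, hBconn, hBac⟩, ?_⟩
  -- uniqueness of w
  intro w' hw'T hw's
  have hvw' : v ≠ w' := fun h =>
    G.not_isDiag_of_mem_edgeSet (hT₂G hw'T) (Sym2.mk_isDiag_iff.mpr h)
  have hadjw' : (SimpleGraph.fromEdgeSet T₂).Adj v w' := by
    rw [SimpleGraph.fromEdgeSet_adj]; exact ⟨hw'T, hvw'⟩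
  have hq0 : (Walk.cons hadjw' Walk.nil).IsPath := by
    rw [Walk.cons_isPath_iff]
    simpa using hvw'
  have ht : ((Walk.cons hy p').takeUntil w' hw's).IsPath := hp.takeUntil hw's
  have huniq := SimpleGraph.isAcyclic_iff_path_unique.mp hH₂.IsAcyclic
    ⟨(Walk.cons hy p').takeUntil w' hw's, ht⟩ ⟨Walk.cons hadjw' Walk.nil, hq0⟩
  have ht2 : (Walk.cons hy p').takeUntil w' hw's = Walk.cons hadjw' Walk.nil :=
    congrArg Subtype.val huniq
  have hsup : (Walk.cons hy p').support
      = [v, w'] ++ ((Walk.cons hy p').dropUntil w' hw's).support.tail := by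
    conv_lhs => rw [← Walk.take_spec _ hw's]
    rw [Walk.support_append, ht2]
    simp
  rw [hsup] at hadj
  simpa [eq_comm] using hadj.symm
end
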